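/- Let k ≥ 1 and let G = (V,E) be a graph on n vertices. For any real penalty parameters c1 > 1 and c2 > 1, the linear-based QUBO value satisfies Q^l_{c1,c2}(k,G) = α_k(G); moreover, if (x̃, s̃, t̃) maximizes H^l_{c1,c2} over all binary (x,s,t), then x̃ is MkCS-feasible and Σ_{i∈[n],r∈[k]} x̃_{ir} = α_k(G). -/

import Mathlib

open Finset

/-- `x ∈ {0,1}^{n×k}`. -/
def MkBin {n k : ℕ} (x : Fin n → Fin k → ℝ) : Prop :=
  ∀ i r, x i r = 0 ∨ x i r = 1

/-- The edge set of a finite simple undirected graph, each unordered edge listed once. -/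
def SimpleEdges {n : ℕ} (E : Finset (Fin n × Fin n)) : Prop :=
  (∀ p ∈ E, p.1 ≠ p.2) ∧ ∀ p ∈ E, p.swap ∉ E

/-- MkCS-feasibility of `x`. -/
def MkFeas {n k : ℕ} (E : Finset (Fin n × Fin n)) (x : Fin n → Fin k → ℝ) : Prop :=
  (∀ p ∈ E, ∀ r, x p.1 r + x p.2 r ≤ 1) ∧ ∀ i, (∑ r, x i r) ≤ 1

/-- The MkCS objective `Σ_{i,r} x_{ir}`. -/
def MkObj {n k : ℕ} (x : Fin n → Fin k → ℝ) : ℝ := ∑ i, ∑ r, x i r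

/-- Nonlinear-based QUBO objective `H^n_{c1,c2}`. -/
def Hn {n k : ℕ} (c1 c2 : ℝ) (E : Finset (Fin n × Fin n)) (x : Fin n → Fin k → ℝ) : ℝ :=
  MkObj x - c1 * (∑ p ∈ E, ∑ r, x p.1 r * x p.2 r)
    - c2 * (∑ i, ∑ r, ∑ p ∈ Finset.univ.filter (fun p => p ≠ r), x i r * x i p)

/-- `s ∈ {0,1}^{E×k}` (only the values on edges of `E` matter). -/
def SBin {n k : ℕ} (E : Finset (Fin n × Fin n)) (s : Fin n × Fin n → Fin k → ℝ) : Prop :=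
  ∀ p ∈ E, ∀ r, s p r = 0 ∨ s p r = 1

/-- `t ∈ {0,1}^n`. -/
def TBin {n : ℕ} (t : Fin n → ℝ) : Prop := ∀ i, t i = 0 ∨ t i = 1

/-- Linear-based QUBO objective `H^l_{c1,c2}`. -/
def Hl {n k : ℕ} (c1 c2 : ℝ) (E : Finset (Fin n × Fin n))
    (x : Fin n → Fin k → ℝ) (s : Fin n × Fin n → Fin k → ℝ) (t : Fin n → ℝ) : ℝ :=
  MkObj x - c1 * (∑ p ∈ E, ∑ r, (x p.1 r + x p.2 r + s p r - 1) ^ 2)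
    - c2 * (∑ i, ((∑ r, x i r) + t i - 1) ^ 2)


lemma binsum_cases {β : Type*} [Fintype β] (f : β → ℝ)
    (hf : ∀ b, f b = 0 ∨ f b = 1) : (∑ b, f b) = 0 ∨ 1 ≤ ∑ b, f b := by
  by_cases h : ∀ b, f b = 0
  · left; exact Finset.sum_eq_zero (fun b _ => h b)
  · right
    push_neg at h
    obtain ⟨b0, hne⟩ := h
    have h1 : f b0 = 1 := (hf b0).resolve_left hne
    calc (1:ℝ) = f b0 := h1.symm
      _ ≤ ∑ b, f b :=
        Finset.single_le_sum (fun b _ => by rcases hf b with h|h <;> simp [h])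
          (Finset.mem_univ b0)

lemma binsum_nonneg {β : Type*} [Fintype β] (f : β → ℝ)
    (hf : ∀ b, f b = 0 ∨ f b = 1) : 0 ≤ ∑ b, f b :=
  Finset.sum_nonneg (fun b _ => by rcases hf b with h|h <;> simp [h])

lemma binsum_le_one {β : Type*} [Fintype β] (f : β → ℝ)
    (hf : ∀ b, f b = 0 ∨ f b = 1) (h : (∑ b, f b) ≤ 1) :
    (∑ b, f b) = 0 ∨ (∑ b, f b) = 1 := by
  rcases binsum_cases f hf with h0 | h1
  · exact Or.inl h0
  · exact Or.inr (le_antisymm h h1)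

lemma binsum_two_le {β : Type*} [Fintype β] [DecidableEq β] (f : β → ℝ)
    (hf : ∀ b, f b = 0 ∨ f b = 1) (h : ¬ (∑ b, f b) ≤ 1) :
    ∃ b0, f b0 = 1 ∧ 2 ≤ ∑ b, f b := by
  push_neg at h
  have hb0 : ∃ b0, f b0 = 1 := by
    by_contra hc
    push_neg at hc
    have : ∀ b, f b = 0 := fun b => (hf b).resolve_right (hc b)
    rw [Finset.sum_eq_zero (fun b _ => this b)] at h
    linarith
  obtain ⟨b0, hb0⟩ := hb0
  refine ⟨b0, hb0, ?_⟩
  have hsplit : ∑ b, f b = f b0 + ∑ b ∈ Finset.univ.erase b0, f b :=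
    (Finset.add_sum_erase _ f (Finset.mem_univ b0)).symm
  have hrest : 1 ≤ ∑ b ∈ Finset.univ.erase b0, f b := by
    by_contra hc
    push_neg at hc
    have h0 : ∑ b ∈ Finset.univ.erase b0, f b = 0 ∨
        1 ≤ ∑ b ∈ Finset.univ.erase b0, f b := by
      by_cases hz : ∀ b ∈ Finset.univ.erase b0, f b = 0
      · exact Or.inl (Finset.sum_eq_zero hz)
      · push_neg at hz
        obtain ⟨b1, hb1, hne⟩ := hz
        have h1 : f b1 = 1 := (hf b1).resolve_left hne
        exact Or.inr (h1 ▸ Finset.single_le_sum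
          (fun b _ => by rcases hf b with h|h <;> simp [h]) hb1)
    rcases h0 with h0 | h0
    · rw [hsplit, h0, hb0] at h; linarith
    · linarith
  rw [hsplit, hb0]; linarith

noncomputable def Xm {n k : ℕ} (x : Fin n → Fin k → ℝ) (i : Fin n) (r0 : Fin k) :
    Fin n → Fin k → ℝ :=
  fun a b => if a = i ∧ b = r0 then 0 else x a b

noncomputable def Sm {n k : ℕ} (x : Fin n → Fin k → ℝ) (s : Fin n × Fin n → Fin k → ℝ)
    (i : Fin n) (r0 : Fin k) : Fin n × Fin n → Fin k → ℝ :=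
  fun p b => if (p.1 = i ∨ p.2 = i) ∧ b = r0 then
    1 - Xm x i r0 p.1 r0 - Xm x i r0 p.2 r0 else s p b

noncomputable def Tm {n k : ℕ} (x : Fin n → Fin k → ℝ) (t : Fin n → ℝ)
    (i : Fin n) (r0 : Fin k) : Fin n → ℝ :=
  fun a => if a = i then (if 1 ≤ ∑ b, Xm x i r0 a b then 0 else 1) else t a

section Step
variable {n k : ℕ} (E : Finset (Fin n × Fin n)) (x : Fin n → Fin k → ℝ)
  (s : Fin n × Fin n → Fin k → ℝ) (t : Fin n → ℝ) (i : Fin n) (r0 : Fin k)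

lemma Xm_bin (hx : MkBin x) : MkBin (Xm x i r0) := by
  intro a b
  unfold Xm
  split
  · exact Or.inl rfl
  · exact hx a b

lemma Xm_sum_ne (a : Fin n) (ha : a ≠ i) : ∑ b, Xm x i r0 a b = ∑ b, x a b := by
  refine Finset.sum_congr rfl (fun b _ => ?_)
  simp [Xm, ha]

lemma Xm_sum_i (hir : x i r0 = 1) : ∑ b, Xm x i r0 i b = (∑ b, x i b) - 1 := by
  have h1 : ∑ b, Xm x i r0 i b
      = Xm x i r0 i r0 + ∑ b ∈ Finset.univ.erase r0, Xm x i r0 i b :=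
    (Finset.add_sum_erase _ _ (Finset.mem_univ r0)).symm
  have h2 : ∑ b, x i b = x i r0 + ∑ b ∈ Finset.univ.erase r0, x i b :=
    (Finset.add_sum_erase _ _ (Finset.mem_univ r0)).symm
  have h3 : ∑ b ∈ Finset.univ.erase r0, Xm x i r0 i b
      = ∑ b ∈ Finset.univ.erase r0, x i b := by
    refine Finset.sum_congr rfl (fun b hb => ?_)
    have : b ≠ r0 := (Finset.mem_erase.mp hb).1
    simp [Xm, this]
  have h4 : Xm x i r0 i r0 = 0 := by simp [Xm]
  rw [h1, h3, h4, hir] at *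
  linarith [h2]

lemma Sm_bin (hE : SimpleEdges E) (hx : MkBin x) (hs : SBin E s) :
    SBin E (Sm x s i r0) := by
  intro p hp b
  unfold Sm
  split
  · rename_i hc
    have hne : p.1 ≠ p.2 := hE.1 p hp
    rcases hc.1 with h1 | h2
    · have h2' : p.2 ≠ i := fun h => hne (h1.trans h.symm)
      have e1 : Xm x i r0 p.1 r0 = 0 := by simp [Xm, h1]
      have e2 : Xm x i r0 p.2 r0 = x p.2 r0 := by simp [Xm, h2']
      rw [e1, e2]
      rcases hx p.2 r0 with h | h <;> rw [h] <;> [right; left] <;> ring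
    · have h1' : p.1 ≠ i := fun h => hne (h.trans h2.symm)
      have e1 : Xm x i r0 p.1 r0 = x p.1 r0 := by simp [Xm, h1']
      have e2 : Xm x i r0 p.2 r0 = 0 := by simp [Xm, h2]
      rw [e1, e2]
      rcases hx p.1 r0 with h | h <;> rw [h] <;> [right; left] <;> ring
  · exact hs p hp b

lemma Tm_bin (ht : TBin t) : TBin (Tm x t i r0) := by
  intro a
  unfold Tm
  split
  · split
    · exact Or.inl rfl
    · exact Or.inr rfl
  · exact ht a

lemma Xm_obj (hir : x i r0 = 1) : MkObj (Xm x i r0) = MkObj x - 1 := by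
  unfold MkObj
  have h1 : ∀ a : Fin n, ∑ b, Xm x i r0 a b
      = (∑ b, x a b) - (if a = i then (1:ℝ) else 0) := by
    intro a
    by_cases ha : a = i
    · subst ha; rw [Xm_sum_i _ _ _ hir]; simp
    · rw [Xm_sum_ne x i r0 a ha]; simp [ha]
  rw [Finset.sum_congr rfl (fun a _ => h1 a), Finset.sum_sub_distrib]
  simp

lemma Xm_edge_term (hE : SimpleEdges E) (p : Fin n × Fin n) (hp : p ∈ E) (b : Fin k) :
    (Xm x i r0 p.1 b + Xm x i r0 p.2 b + Sm x s i r0 p b - 1) ^ 2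
      ≤ (x p.1 b + x p.2 b + s p b - 1) ^ 2 := by
  by_cases hc : (p.1 = i ∨ p.2 = i) ∧ b = r0
  · obtain ⟨h1, hb⟩ := hc
    have hs' : Sm x s i r0 p b = 1 - Xm x i r0 p.1 r0 - Xm x i r0 p.2 r0 := by
      unfold Sm; rw [if_pos ⟨h1, hb⟩]
    rw [hs', hb]
    have : (Xm x i r0 p.1 r0 + Xm x i r0 p.2 r0
        + (1 - Xm x i r0 p.1 r0 - Xm x i r0 p.2 r0) - 1) ^ 2 = 0 := by ring
    rw [this]
    exact sq_nonneg _
  · have h1 : ¬(p.1 = i ∧ b = r0) := fun h => hc ⟨Or.inl h.1, h.2⟩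
    have h2 : ¬(p.2 = i ∧ b = r0) := fun h => hc ⟨Or.inr h.1, h.2⟩
    have e1 : Xm x i r0 p.1 b = x p.1 b := if_neg h1
    have e2 : Xm x i r0 p.2 b = x p.2 b := if_neg h2
    have e3 : Sm x s i r0 p b = s p b := if_neg hc
    rw [e1, e2, e3]

lemma Xm_vertex_term (hx : MkBin x) (ht : TBin t) (hir : x i r0 = 1) (a : Fin n) :
    ((∑ b, Xm x i r0 a b) + Tm x t i r0 a - 1) ^ 2
      ≤ ((∑ b, x a b) + t a - 1) ^ 2 := by
  by_cases ha : a = i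
  · subst ha
    have hSi := Xm_sum_i x a r0 hir
    have hS1 : 1 ≤ ∑ b, x a b := by
      calc (1:ℝ) = x a r0 := hir.symm
        _ ≤ ∑ b, x a b := Finset.single_le_sum
          (fun b _ => by rcases hx a b with h|h <;> simp [h]) (Finset.mem_univ r0)
    have ht0 : 0 ≤ t a := by rcases ht a with h|h <;> simp [h]
    have htm : Tm x t a r0 a = if 1 ≤ ∑ b, Xm x a r0 a b then 0 else 1 := if_pos rfl
    rw [htm]
    by_cases hge : 1 ≤ ∑ b, Xm x a r0 a b
    · rw [if_pos hge, hSi] at *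
      nlinarith [hge]
    · rw [if_neg hge]
      have hz : ∑ b, Xm x a r0 a b = 0 := by
        rcases binsum_cases (fun b => Xm x a r0 a b) (fun b => Xm_bin x a r0 hx a b)
          with h | h
        · exact h
        · exact absurd h hge
      rw [hz]
      nlinarith
  · have e1 : ∑ b, Xm x i r0 a b = ∑ b, x a b := Xm_sum_ne x i r0 a ha
    have e2 : Tm x t i r0 a = t a := if_neg ha
    rw [e1, e2]

lemma Xm_card (hx : MkBin x) (hir : x i r0 = 1) :
    (Finset.univ.filter (fun q : Fin n × Fin k => Xm x i r0 q.1 q.2 = 1)).card + 1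
      = (Finset.univ.filter (fun q : Fin n × Fin k => x q.1 q.2 = 1)).card := by
  have hset : Finset.univ.filter (fun q : Fin n × Fin k => Xm x i r0 q.1 q.2 = 1)
      = (Finset.univ.filter (fun q : Fin n × Fin k => x q.1 q.2 = 1)).erase (i, r0) := by
    ext ⟨a, b⟩
    simp only [Finset.mem_filter, Finset.mem_erase, Finset.mem_univ, true_and,
      Prod.mk.injEq]
    by_cases hab : a = i ∧ b = r0
    · simp [hab, Xm]
    · simp [hab, Xm]
  rw [hset]
  exact Finset.card_erase_add_one (by simp [hir])

end Step

section Cases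
variable {n k : ℕ} (E : Finset (Fin n × Fin n)) (c1 c2 : ℝ)
  (x : Fin n → Fin k → ℝ) (s : Fin n × Fin n → Fin k → ℝ) (t : Fin n → ℝ)

lemma P1_mono (hE : SimpleEdges E) (i : Fin n) (r0 : Fin k) :
    ∑ p ∈ E, ∑ b, (Xm x i r0 p.1 b + Xm x i r0 p.2 b + Sm x s i r0 p b - 1) ^ 2
      ≤ ∑ p ∈ E, ∑ b, (x p.1 b + x p.2 b + s p b - 1) ^ 2 :=
  Finset.sum_le_sum (fun p hp => Finset.sum_le_sum (fun b _ =>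
    Xm_edge_term E x s i r0 hE p hp b))

lemma P2_mono (hx : MkBin x) (ht : TBin t) (i : Fin n) (r0 : Fin k)
    (hir : x i r0 = 1) :
    ∑ a, ((∑ b, Xm x i r0 a b) + Tm x t i r0 a - 1) ^ 2
      ≤ ∑ a, ((∑ b, x a b) + t a - 1) ^ 2 :=
  Finset.sum_le_sum (fun a _ => Xm_vertex_term x t i r0 hx ht hir a)

/-- Case A: an edge violation at `(p0, r0)`; flipping `x p0.1 r0` improves `Hl`. -/
lemma caseA (hE : SimpleEdges E) (hc1 : 1 < c1) (hc2 : 1 < c2)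
    (hx : MkBin x) (hs : SBin E s) (ht : TBin t)
    (p0 : Fin n × Fin n) (hp0 : p0 ∈ E) (r0 : Fin k)
    (h1 : x p0.1 r0 = 1) (h2 : x p0.2 r0 = 1) :
    Hl c1 c2 E x s t
      < Hl c1 c2 E (Xm x p0.1 r0) (Sm x s p0.1 r0) (Tm x t p0.1 r0) := by
  set i := p0.1 with hi
  -- the (p0, r0) edge term drops by at least 1
  have hnew0 : (Xm x i r0 p0.1 r0 + Xm x i r0 p0.2 r0 + Sm x s i r0 p0 r0 - 1) ^ 2
      = 0 := by
    have hsm : Sm x s i r0 p0 r0 = 1 - Xm x i r0 p0.1 r0 - Xm x i r0 p0.2 r0 := by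
      unfold Sm; rw [if_pos ⟨Or.inl hi.symm, rfl⟩]
    rw [hsm]; ring
  have hold1 : (1:ℝ) ≤ (x p0.1 r0 + x p0.2 r0 + s p0 r0 - 1) ^ 2 := by
    rcases hs p0 hp0 r0 with h | h <;> rw [h1, h2, h] <;> norm_num
  have hdrop : (1:ℝ)
      ≤ ∑ p ∈ E, ∑ b, ((x p.1 b + x p.2 b + s p b - 1) ^ 2
          - (Xm x i r0 p.1 b + Xm x i r0 p.2 b + Sm x s i r0 p b - 1) ^ 2) := by
    have hterm : ∀ p ∈ E, (0:ℝ)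
        ≤ ∑ b, ((x p.1 b + x p.2 b + s p b - 1) ^ 2
          - (Xm x i r0 p.1 b + Xm x i r0 p.2 b + Sm x s i r0 p b - 1) ^ 2) :=
      fun p hp => Finset.sum_nonneg (fun b _ => by
        have := Xm_edge_term E x s i r0 hE p hp b; linarith)
    have hp0term : (1:ℝ)
        ≤ ∑ b, ((x p0.1 b + x p0.2 b + s p0 b - 1) ^ 2
          - (Xm x i r0 p0.1 b + Xm x i r0 p0.2 b + Sm x s i r0 p0 b - 1) ^ 2) := by
      have h0 : ∀ b ∈ (Finset.univ : Finset (Fin k)), (0:ℝ)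
          ≤ (x p0.1 b + x p0.2 b + s p0 b - 1) ^ 2
            - (Xm x i r0 p0.1 b + Xm x i r0 p0.2 b + Sm x s i r0 p0 b - 1) ^ 2 :=
        fun b _ => by have := Xm_edge_term E x s i r0 hE p0 hp0 b; linarith
      calc (1:ℝ) ≤ (x p0.1 r0 + x p0.2 r0 + s p0 r0 - 1) ^ 2
            - (Xm x i r0 p0.1 r0 + Xm x i r0 p0.2 r0 + Sm x s i r0 p0 r0 - 1) ^ 2 := by
            rw [hnew0]; linarith
        _ ≤ _ := Finset.single_le_sum h0 (Finset.mem_univ r0)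
    calc (1:ℝ) ≤ _ := hp0term
      _ ≤ _ := Finset.single_le_sum hterm hp0
  have hP1 : ∑ p ∈ E, ∑ b, (Xm x i r0 p.1 b + Xm x i r0 p.2 b + Sm x s i r0 p b - 1) ^ 2
      ≤ (∑ p ∈ E, ∑ b, (x p.1 b + x p.2 b + s p b - 1) ^ 2) - 1 := by
    have := hdrop
    rw [Finset.sum_congr rfl (fun p (_ : p ∈ E) => Finset.sum_sub_distrib _ _),
      Finset.sum_sub_distrib] at this
    linarith
  have hP2 := P2_mono x t hx ht i r0 h1
  have hobj := Xm_obj x i r0 h1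
  have hc1' : (0:ℝ) < c1 := lt_trans one_pos hc1
  have hc2' : (0:ℝ) < c2 := lt_trans one_pos hc2
  unfold Hl
  rw [hobj]
  nlinarith [mul_le_mul_of_nonneg_left hP1 hc1'.le,
    mul_le_mul_of_nonneg_left hP2 hc2'.le]

/-- Case B: a vertex violation at `i`; flipping `x i r0` (with `x i r0 = 1`) improves `Hl`. -/
lemma caseB (hE : SimpleEdges E) (hc1 : 1 < c1) (hc2 : 1 < c2)
    (hx : MkBin x) (hs : SBin E s) (ht : TBin t)
    (i : Fin n) (r0 : Fin k) (hir : x i r0 = 1) (hS2 : 2 ≤ ∑ b, x i b) :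
    Hl c1 c2 E x s t
      < Hl c1 c2 E (Xm x i r0) (Sm x s i r0) (Tm x t i r0) := by
  have hSi : ∑ b, Xm x i r0 i b = (∑ b, x i b) - 1 := Xm_sum_i x i r0 hir
  have hTm : Tm x t i r0 i = 0 := by
    unfold Tm; rw [if_pos rfl, if_pos (by rw [hSi]; linarith)]
  have ht0 : 0 ≤ t i := by rcases ht i with h | h <;> simp [h]
  have ht1 : t i ≤ 1 := by rcases ht i with h | h <;> simp [h]
  have hdropi : (1:ℝ) ≤ ((∑ b, x i b) + t i - 1) ^ 2
      - ((∑ b, Xm x i r0 i b) + Tm x t i r0 i - 1) ^ 2 := by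
    rw [hSi, hTm]
    nlinarith [hS2, ht0, ht1]
  have hdrop : (1:ℝ) ≤ ∑ a, (((∑ b, x a b) + t a - 1) ^ 2
      - ((∑ b, Xm x i r0 a b) + Tm x t i r0 a - 1) ^ 2) := by
    calc (1:ℝ) ≤ _ := hdropi
      _ ≤ _ := Finset.single_le_sum (fun (a : Fin n) _ => by
          exact sub_nonneg.mpr (Xm_vertex_term x t i r0 hx ht hir a)) (Finset.mem_univ i)
  have hP2 : ∑ a, ((∑ b, Xm x i r0 a b) + Tm x t i r0 a - 1) ^ 2
      ≤ (∑ a, ((∑ b, x a b) + t a - 1) ^ 2) - 1 := by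
    have := hdrop
    rw [Finset.sum_sub_distrib] at this
    linarith
  have hP1 := P1_mono E x s hE i r0
  have hobj := Xm_obj x i r0 hir
  have hc1' : (0:ℝ) < c1 := lt_trans one_pos hc1
  have hc2' : (0:ℝ) < c2 := lt_trans one_pos hc2
  unfold Hl
  rw [hobj]
  nlinarith [mul_le_mul_of_nonneg_left hP1 hc1'.le,
    mul_le_mul_of_nonneg_left hP2 hc2'.le]

end Cases

lemma Hl_le_obj {n k : ℕ} (E : Finset (Fin n × Fin n)) (c1 c2 : ℝ)
    (hc1 : 0 < c1) (hc2 : 0 < c2) (x : Fin n → Fin k → ℝ)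
    (s : Fin n × Fin n → Fin k → ℝ) (t : Fin n → ℝ) :
    Hl c1 c2 E x s t ≤ MkObj x := by
  have hP1 : 0 ≤ ∑ p ∈ E, ∑ r, (x p.1 r + x p.2 r + s p r - 1) ^ 2 :=
    Finset.sum_nonneg (fun p _ => Finset.sum_nonneg (fun r _ => sq_nonneg _))
  have hP2 : 0 ≤ ∑ i, ((∑ r, x i r) + t i - 1) ^ 2 :=
    Finset.sum_nonneg (fun i _ => sq_nonneg _)
  unfold Hl
  nlinarith [mul_nonneg hc1.le hP1, mul_nonneg hc2.le hP2]

lemma Hl_key {n k : ℕ} (E : Finset (Fin n × Fin n)) (hE : SimpleEdges E)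
    (c1 c2 : ℝ) (hc1 : 1 < c1) (hc2 : 1 < c2) (α : ℝ)
    (hub : ∀ x : Fin n → Fin k → ℝ, MkBin x → MkFeas E x → MkObj x ≤ α) :
    ∀ N (x : Fin n → Fin k → ℝ) (s : Fin n × Fin n → Fin k → ℝ) (t : Fin n → ℝ),
      MkBin x → SBin E s → TBin t →
      (Finset.univ.filter (fun q : Fin n × Fin k => x q.1 q.2 = 1)).card = N →
      Hl c1 c2 E x s t ≤ α ∧ (¬ MkFeas E x → Hl c1 c2 E x s t < α) := by
  intro N
  induction N using Nat.strong_induction_on with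
  | _ N IH =>
    intro x s t hx hs ht hcard
    by_cases hfeas : MkFeas E x
    · exact ⟨(Hl_le_obj E c1 c2 (lt_trans one_pos hc1) (lt_trans one_pos hc2)
        x s t).trans (hub x hx hfeas), fun h => absurd hfeas h⟩
    · -- there is a violation; find (i, r0) with x i r0 = 1 to flip
      have himprove : ∃ (i : Fin n) (r0 : Fin k), x i r0 = 1 ∧
          Hl c1 c2 E x s t
            < Hl c1 c2 E (Xm x i r0) (Sm x s i r0) (Tm x t i r0) := by
        by_cases hA : ∀ p ∈ E, ∀ r, x p.1 r + x p.2 r ≤ 1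
        · have hB : ∃ a, ¬ (∑ r, x a r) ≤ 1 := by
            by_contra hc
            push_neg at hc
            exact hfeas ⟨hA, hc⟩
          obtain ⟨a, ha⟩ := hB
          obtain ⟨r0, hr0, h2S⟩ := binsum_two_le (fun b => x a b) (hx a) ha
          exact ⟨a, r0, hr0, caseB E c1 c2 x s t hE hc1 hc2 hx hs ht a r0 hr0 h2S⟩
        · push_neg at hA
          obtain ⟨p0, hp0, r0, hviol⟩ := hA
          have h12 : x p0.1 r0 = 1 ∧ x p0.2 r0 = 1 := by
            rcases hx p0.1 r0 with h | h <;> rcases hx p0.2 r0 with h' | h' <;>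
              rw [h, h'] at hviol <;> norm_num at hviol
            exact ⟨h, h'⟩
          exact ⟨p0.1, r0, h12.1,
            caseA E c1 c2 x s t hE hc1 hc2 hx hs ht p0 hp0 r0 h12.1 h12.2⟩
      obtain ⟨i, r0, hir, himp⟩ := himprove
      have hcard' := Xm_card x i r0 hx hir
      rw [hcard] at hcard'
      have hlt : Hl c1 c2 E (Xm x i r0) (Sm x s i r0) (Tm x t i r0) ≤ α :=
        (IH _ (by omega) (Xm x i r0) (Sm x s i r0) (Tm x t i r0)
          (Xm_bin x i r0 hx) (Sm_bin E x s i r0 hE hx hs) (Tm_bin x t i r0 ht)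
          rfl).1
      have : Hl c1 c2 E x s t < α := lt_of_lt_of_le himp hlt
      exact ⟨this.le, fun _ => this⟩


/-- For c1 > 1, c2 > 1, the linear-based QUBO value equals alpha_k(G), and any
maximizer of H^l over binary points has x-part MkCS-feasible with objective alpha_k(G). -/
theorem stmt_0 (n k : ℕ) (hk : 1 ≤ k) (E : Finset (Fin n × Fin n)) (hE : SimpleEdges E)
    (c1 c2 : ℝ) (hc1 : 1 < c1) (hc2 : 1 < c2) (α : ℝ)
    (hα : IsGreatest {v : ℝ | ∃ x : Fin n → Fin k → ℝ, MkBin x ∧ MkFeas E x ∧ MkObj x = v} α) :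
    IsGreatest {v : ℝ | ∃ (x : Fin n → Fin k → ℝ) (s : Fin n × Fin n → Fin k → ℝ)
        (t : Fin n → ℝ), MkBin x ∧ SBin E s ∧ TBin t ∧ Hl c1 c2 E x s t = v} α ∧
    ∀ (xt : Fin n → Fin k → ℝ) (st : Fin n × Fin n → Fin k → ℝ) (tt : Fin n → ℝ),
      MkBin xt → SBin E st → TBin tt →
      (∀ (x : Fin n → Fin k → ℝ) (s : Fin n × Fin n → Fin k → ℝ) (t : Fin n → ℝ),
        MkBin x → SBin E s → TBin t → Hl c1 c2 E x s t ≤ Hl c1 c2 E xt st tt) →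
      MkFeas E xt ∧ MkObj xt = α := by
  have hub : ∀ x : Fin n → Fin k → ℝ, MkBin x → MkFeas E x → MkObj x ≤ α :=
    fun x hx hf => hα.2 ⟨x, hx, hf, rfl⟩
  have hkey := Hl_key E hE c1 c2 hc1 hc2 α hub
  -- the optimal feasible point, turned into a QUBO point with zero penalties
  obtain ⟨x0, hx0bin, hx0feas, hx0obj⟩ := hα.1
  set s0 : Fin n × Fin n → Fin k → ℝ := fun p r => 1 - x0 p.1 r - x0 p.2 r with hs0def
  set t0 : Fin n → ℝ := fun a => 1 - ∑ r, x0 a r with ht0def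
  have hs0 : SBin E s0 := by
    intro p hp r
    have hle := hx0feas.1 p hp r
    rcases hx0bin p.1 r with h | h <;> rcases hx0bin p.2 r with h' | h'
    · right; simp [hs0def, h, h']
    · left; simp [hs0def, h, h']
    · left; simp [hs0def, h, h']
    · exfalso; rw [h, h'] at hle; linarith
  have ht0 : TBin t0 := by
    intro a
    rcases binsum_le_one (fun r => x0 a r) (hx0bin a) (hx0feas.2 a) with h | h <;>
      simp [ht0def, h]
  have hHl0 : Hl c1 c2 E x0 s0 t0 = α := by
    unfold Hl
    have hz1 : ∑ p ∈ E, ∑ r, (x0 p.1 r + x0 p.2 r + s0 p r - 1) ^ 2 = 0 :=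
      Finset.sum_eq_zero (fun p _ => Finset.sum_eq_zero (fun r _ => by
        simp [hs0def]))
    have hz2 : ∑ a, ((∑ r, x0 a r) + t0 a - 1) ^ 2 = 0 :=
      Finset.sum_eq_zero (fun a _ => by simp [ht0def])
    rw [hz1, hz2, hx0obj]
    ring
  constructor
  · constructor
    · exact ⟨x0, s0, t0, hx0bin, hs0, ht0, hHl0⟩
    · rintro v ⟨x, s, t, hx, hs, ht, rfl⟩
      exact (hkey _ x s t hx hs ht rfl).1
  · intro xt st tt hxt hst htt hmax
    have hαle : α ≤ Hl c1 c2 E xt st tt := by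
      rw [← hHl0]
      exact hmax x0 s0 t0 hx0bin hs0 ht0
    have hfeas : MkFeas E xt := by
      by_contra hinf
      have := (hkey _ xt st tt hxt hst htt rfl).2 hinf
      linarith
    refine ⟨hfeas, ?_⟩
    have h1 : Hl c1 c2 E xt st tt ≤ MkObj xt :=
      Hl_le_obj E c1 c2 (lt_trans one_pos hc1) (lt_trans one_pos hc2) xt st tt
    have h2 : MkObj xt ≤ α := hub xt hxt hfeas
    linarith
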